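/- Let $C$ be a smooth complete complex curve of genus $g \geq 2$ with generators $a_1, b_1, \ldots, a_g, b_g$ of $\pi_1(C,c)$ subject to the relation $[a_1,b_1]\cdots[a_g,b_g]=1$. There exists a unitary representation $\rho : \pi_1(C,c) \to U(2)$ such that for every finite-index normal subgroup $H \lhd \pi_1(C,c)$, the restricted representation $\rho|_H$ is irreducible. -/

import Mathlib

/-- The surface group relator `[a₁,b₁]⋯[a_g,b_g]` in the free group on `2g` generators,
where `Sum.inl i` plays the role of `aᵢ` and `Sum.inr i` of `bᵢ`. -/
def surfaceRelator (g : ℕ) : FreeGroup (Fin g ⊕ Fin g) :=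
  (List.ofFn fun i : Fin g =>
    FreeGroup.of (Sum.inl i) * FreeGroup.of (Sum.inr i) *
      (FreeGroup.of (Sum.inl i))⁻¹ * (FreeGroup.of (Sum.inr i))⁻¹).prod

/-- The fundamental group `π₁(C)` of a smooth complete complex curve of genus `g`:
the group with generators `a₁,b₁,…,a_g,b_g` subject to `[a₁,b₁]⋯[a_g,b_g] = 1`. -/
abbrev SurfaceGroup (g : ℕ) : Type :=
  PresentedGroup ({surfaceRelator g} : Set (FreeGroup (Fin g ⊕ Fin g)))


noncomputable section Stmt11Aux
open Matrix Complex

/-- rotation matrix by complex angle -/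
def rotM (θ : ℂ) : Matrix (Fin 2) (Fin 2) ℂ :=
  !![Complex.cos θ, -Complex.sin θ; Complex.sin θ, Complex.cos θ]

lemma rotM_mul (θ φ : ℂ) : rotM θ * rotM φ = rotM (θ + φ) := by
  ext i j
  fin_cases i <;> fin_cases j <;>
    simp [rotM, Matrix.mul_apply, Fin.sum_univ_two, Complex.cos_add, Complex.sin_add] <;> ring

lemma rotM_zero : rotM 0 = 1 := by
  ext i j; fin_cases i <;> fin_cases j <;> simp [rotM, Matrix.one_apply]

lemma rotM_pow (θ : ℂ) (n : ℕ) : rotM θ ^ n = rotM (n * θ) := by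
  induction n with
  | zero => simp [rotM_zero]
  | succ n ih => rw [pow_succ, ih, rotM_mul]; congr 1; push_cast; ring

lemma rotM_unitary (θ : ℝ) : rotM θ ∈ Matrix.unitaryGroup (Fin 2) ℂ := by
  rw [Matrix.mem_unitaryGroup_iff]
  ext i j
  fin_cases i <;> fin_cases j <;>
    simp [rotM, Matrix.mul_apply, Fin.sum_univ_two, Matrix.one_apply,
      Matrix.conjTranspose_apply, ← Complex.ofReal_cos, ← Complex.ofReal_sin,
      ← Complex.ofReal_mul, ← Complex.ofReal_add, ← Complex.ofReal_neg] <;>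
    push_cast <;> nlinarith [Real.sin_sq_add_cos_sq θ]

/-- the diagonal matrix -/
def diagM : Matrix (Fin 2) (Fin 2) ℂ := !![Complex.exp I, 0; 0, Complex.exp (-I)]

lemma diagM_pow (n : ℕ) : diagM ^ n = !![Complex.exp (n * I), 0; 0, Complex.exp (-(n * I))] := by
  induction n with
  | zero => ext i j; fin_cases i <;> fin_cases j <;> simp [Matrix.one_apply]
  | succ n ih =>
      rw [pow_succ, ih]
      ext i j
      fin_cases i <;> fin_cases j <;>
        simp [diagM, Matrix.mul_apply, Fin.sum_univ_two, ← Complex.exp_add] <;> ring_nf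

lemma diagM_unitary : diagM ∈ Matrix.unitaryGroup (Fin 2) ℂ := by
  rw [Matrix.mem_unitaryGroup_iff]
  ext i j
  fin_cases i <;> fin_cases j <;>
    simp [diagM, Matrix.mul_apply, Fin.sum_univ_two, Matrix.one_apply,
      Matrix.conjTranspose_apply, ← Complex.exp_conj, ← Complex.exp_add, Complex.exp_eq_one_iff]

lemma pi_ne_ratio (n : ℕ) (k : ℤ) (hn : n ≠ 0) : (n : ℝ) ≠ k * Real.pi := by
  intro h
  have hk : (k : ℝ) ≠ 0 := by
    rintro hk0
    rw [hk0, zero_mul] at h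
    exact hn (by exact_mod_cast h)
  have hpi : Real.pi = ((n / k : ℚ) : ℝ) := by
    push_cast
    rw [eq_div_iff hk, mul_comm]
    exact h.symm
  exact Rat.not_irrational _ (hpi ▸ irrational_pi)

lemma exp_ne (n : ℕ) (hn : n ≠ 0) : Complex.exp (n * I) ≠ Complex.exp (-(n * I)) := by
  rw [Ne, Complex.exp_eq_exp_iff_exists_int]
  rintro ⟨k, hk⟩
  have h2 : ((2 * n : ℝ) : ℂ) * I = ((k * (2 * Real.pi) : ℝ) : ℂ) * I := by
    push_cast
    linear_combination hk
  have h3 : (2 * (n : ℝ)) = k * (2 * Real.pi) := by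
    exact_mod_cast mul_right_cancel₀ Complex.I_ne_zero h2
  exact pi_ne_ratio n k hn (by linarith)

lemma sin_nat_ne_zero (n : ℕ) (hn : n ≠ 0) : Complex.sin (n : ℂ) ≠ 0 := by
  have hr : Real.sin n ≠ 0 := by
    rw [Ne, Real.sin_eq_zero_iff]
    rintro ⟨k, hk⟩
    exact pi_ne_ratio n k hn hk.symm
  have : ((Real.sin n : ℝ) : ℂ) = Complex.sin (n : ℂ) := by
    rw [Complex.ofReal_sin]; norm_num
  rw [← this]
  exact_mod_cast hr

lemma core (n : ℕ) (hn : n ≠ 0) (W : Submodule ℂ (Fin 2 → ℂ))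
    (hA : ∀ w ∈ W, (diagM ^ n).mulVec w ∈ W)
    (hB : ∀ w ∈ W, (rotM 1 ^ n).mulVec w ∈ W)
    (hW : W ≠ ⊥) : W = ⊤ := by
  set e0 : Fin 2 → ℂ := ![1, 0] with he0def
  set e1 : Fin 2 → ℂ := ![0, 1] with he1def
  have htop : e0 ∈ W → e1 ∈ W → W = ⊤ := by
    intro h0 h1
    rw [Submodule.eq_top_iff']
    intro v
    have hv : v = v 0 • e0 + v 1 • e1 := by
      funext i; fin_cases i <;> simp [he0def, he1def]
    rw [hv]; exact W.add_mem (W.smul_mem _ h0) (W.smul_mem _ h1)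
  have hBpow : rotM 1 ^ n = rotM n := by rw [rotM_pow]; norm_num
  have hsin : Complex.sin (n : ℂ) ≠ 0 := sin_nat_ne_zero n hn
  have h01 : e0 ∈ W → e1 ∈ W := by
    intro h0
    have hm := hB e0 h0
    rw [hBpow] at hm
    have key : (Complex.sin (n:ℂ))⁻¹ • ((rotM n).mulVec e0 - Complex.cos (n:ℂ) • e0) = e1 := by
      funext i; fin_cases i <;>
        simp [rotM, Matrix.mulVec, dotProduct, Fin.sum_univ_two, he0def, he1def,
          Matrix.vecHead, Matrix.vecTail, Function.comp, Pi.smul_apply, Pi.sub_apply,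
          smul_eq_mul] <;>
        (try field_simp) <;> (try ring)
    rw [← key]
    exact W.smul_mem _ (W.sub_mem hm (W.smul_mem _ h0))
  have h10 : e1 ∈ W → e0 ∈ W := by
    intro h1
    have hm := hB e1 h1
    rw [hBpow] at hm
    have key : (-(Complex.sin (n:ℂ)))⁻¹ • ((rotM n).mulVec e1 - Complex.cos (n:ℂ) • e1) = e0 := by
      funext i; fin_cases i <;>
        simp [rotM, Matrix.mulVec, dotProduct, Fin.sum_univ_two, he0def, he1def,
          Matrix.vecHead, Matrix.vecTail, Function.comp, Pi.smul_apply, Pi.sub_apply,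
          smul_eq_mul] <;>
        (try field_simp) <;> (try ring)
    rw [← key]
    exact W.smul_mem _ (W.sub_mem hm (W.smul_mem _ h1))
  obtain ⟨w, hwW, hw0⟩ := Submodule.ne_bot_iff W |>.mp hW
  have hmu : Complex.exp (n * I) ≠ Complex.exp (-(n * I)) := exp_ne n hn
  have hDw := hA w hwW
  rw [diagM_pow] at hDw
  by_cases h0 : w 0 = 0
  · have h1 : w 1 ≠ 0 := by
      intro h1
      exact hw0 (by funext i; fin_cases i <;> simp [h0, h1])
    have key : ((Complex.exp (-(n*I)) - Complex.exp (n*I)) * w 1)⁻¹ •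
        ((!![Complex.exp (n*I), 0; 0, Complex.exp (-(n*I))]).mulVec w
          - Complex.exp (n*I) • w) = e1 := by
      funext i; fin_cases i <;>
        simp [Matrix.mulVec, dotProduct, Fin.sum_univ_two, he1def, h0,
          Matrix.vecHead, Matrix.vecTail, Function.comp, Pi.smul_apply, Pi.sub_apply,
          smul_eq_mul] <;>
        (try field_simp [sub_ne_zero.mpr hmu.symm]) <;> (try ring)
    have he1 : e1 ∈ W := by
      rw [← key]
      exact W.smul_mem _ (W.sub_mem hDw (W.smul_mem _ hwW))
    exact htop (h10 he1) he1
  · have key : ((Complex.exp (n*I) - Complex.exp (-(n*I))) * w 0)⁻¹ •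
        ((!![Complex.exp (n*I), 0; 0, Complex.exp (-(n*I))]).mulVec w
          - Complex.exp (-(n*I)) • w) = e0 := by
      funext i; fin_cases i <;>
        simp [Matrix.mulVec, dotProduct, Fin.sum_univ_two, he0def,
          Matrix.vecHead, Matrix.vecTail, Function.comp, Pi.smul_apply, Pi.sub_apply,
          smul_eq_mul] <;>
        (try field_simp [sub_ne_zero.mpr hmu]) <;> (try ring)
    have he0 : e0 ∈ W := by
      rw [← key]
      exact W.smul_mem _ (W.sub_mem hDw (W.smul_mem _ hwW))
    exact htop he0 (h01 he0)

lemma rotM_one_unitary : rotM 1 ∈ Matrix.unitaryGroup (Fin 2) ℂ := by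
  simpa using rotM_unitary 1

def genMap (g : ℕ) : Fin g ⊕ Fin g → Matrix.unitaryGroup (Fin 2) ℂ :=
  fun x =>
    if (Sum.elim Fin.val Fin.val x) = 0 then ⟨diagM, diagM_unitary⟩
    else if (Sum.elim Fin.val Fin.val x) = 1 then ⟨rotM 1, rotM_one_unitary⟩ else 1

lemma lift_relator (g : ℕ) :
    FreeGroup.lift (genMap g) (surfaceRelator g) = 1 := by
  unfold surfaceRelator
  rw [map_list_prod]
  apply List.prod_eq_one
  intro x hx
  rw [List.map_ofFn] at hx
  obtain ⟨i, rfl⟩ := List.mem_ofFn.mp hx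
  simp only [Function.comp, _root_.map_mul, _root_.map_inv, FreeGroup.lift_apply_of]
  have h : genMap g (Sum.inl i) = genMap g (Sum.inr i) := rfl
  rw [h]
  group



/-- For `g ≥ 2` there is a unitary representation `ρ : π₁(C) → U(2)` such that for every
finite-index normal subgroup `H ⊴ π₁(C)`, the restriction `ρ|_H` is irreducible:
the only `ρ(H)`-invariant subspaces of `ℂ²` are `0` and `ℂ²`. -/
theorem stmt11 (g : ℕ) (hg : 2 ≤ g) :
    ∃ ρ : SurfaceGroup g →* Matrix.unitaryGroup (Fin 2) ℂ,
      ∀ H : Subgroup (SurfaceGroup g), H.Normal → H.index ≠ 0 →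
        ∀ W : Submodule ℂ (Fin 2 → ℂ),
          (∀ x ∈ H, ∀ w ∈ W, ((ρ x : Matrix (Fin 2) (Fin 2) ℂ)).mulVec w ∈ W) →
          W = ⊥ ∨ W = ⊤ := by
  classical
  have hrel : ∀ r ∈ ({surfaceRelator g} : Set (FreeGroup (Fin g ⊕ Fin g))),
      FreeGroup.lift (genMap g) r = 1 := by
    rintro r rfl
    exact lift_relator g
  refine ⟨PresentedGroup.toGroup hrel, ?_⟩
  intro H hN hI W hW
  by_cases hWbot : W = ⊥
  · exact Or.inl hWbot
  right
  haveI := hN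
  have h0 : (0 : ℕ) < g := by omega
  have h1 : (1 : ℕ) < g := by omega
  set ρ := PresentedGroup.toGroup hrel with hρ
  set a : SurfaceGroup g := PresentedGroup.of (Sum.inl ⟨0, h0⟩) with hadef
  set b : SurfaceGroup g := PresentedGroup.of (Sum.inl ⟨1, h1⟩) with hbdef
  have ha : ρ a = ⟨diagM, diagM_unitary⟩ := by
    rw [hadef, hρ, PresentedGroup.toGroup.of]
    rfl
  have hb : ρ b = ⟨rotM 1, rotM_one_unitary⟩ := by
    rw [hbdef, hρ, PresentedGroup.toGroup.of]
    rfl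
  apply core H.index hI W ?_ ?_ hWbot
  · intro w hw
    have hm := hW (a ^ H.index) (H.pow_index_mem a) w hw
    have hc : ((ρ (a ^ H.index) : Matrix.unitaryGroup (Fin 2) ℂ) : Matrix (Fin 2) (Fin 2) ℂ)
        = diagM ^ H.index := by
      rw [map_pow, ha]
      norm_cast
    rwa [hc] at hm
  · intro w hw
    have hm := hW (b ^ H.index) (H.pow_index_mem b) w hw
    have hc : ((ρ (b ^ H.index) : Matrix.unitaryGroup (Fin 2) ℂ) : Matrix (Fin 2) (Fin 2) ℂ)
        = rotM 1 ^ H.index := by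
      rw [map_pow, hb]
      norm_cast
    rwa [hc] at hm


end Stmt11Aux
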